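/- Let 0 < σ_w² < 1 and let x₁,…,xₙ ∈ ℝ^d satisfy ‖x_i‖₂ = √d for all i and x_i not parallel to x_j for all i ≠ j. Let K ∈ ℝ^{n×n} be the limiting population Gram matrix with entries K_{ij} = Q(cos θ_{ij})/(1 − σ_w²), where cos θ_{ij} ∈ [−1,1] solves cos θ_{ij} = σ_w² Q(cos θ_{ij}) + (1 − σ_w²) x_iᵀx_j/d. Then K is strictly positive definite, i.e. λ_min(K) > 0. -/

import Mathlib

open scoped BigOperators Matrix Kronecker
open MeasureTheory ProbabilityTheory Filter

noncomputable section

/-- ReLU on reals. -/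
def relu (x : ℝ) : ℝ := max x 0

/-- Entrywise ReLU on matrices. -/
def reluM {α β : Type*} (A : Matrix α β ℝ) : Matrix α β ℝ :=
  Matrix.of fun i j => relu (A i j)

/-- Frobenius norm of a matrix. -/
def frobNorm {α β : Type*} [Fintype α] [Fintype β] (A : Matrix α β ℝ) : ℝ :=
  Real.sqrt (∑ i, ∑ j, (A i j) ^ 2)

/-- Euclidean norm of a vector. -/
def euclNorm {α : Type*} [Fintype α] (v : α → ℝ) : ℝ :=
  Real.sqrt (∑ i, (v i) ^ 2)

/-- Operator (spectral) norm of a real matrix. -/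
def opNorm {α β : Type*} [Fintype α] [Fintype β] [DecidableEq β]
    (A : Matrix α β ℝ) : ℝ :=
  ‖(LinearMap.toContinuousLinearMap (Matrix.toEuclideanLin A))‖

/-- Least eigenvalue of a square matrix, as the infimum of the Rayleigh
quotient over the unit sphere. -/
def lamMin {n : ℕ} (A : Matrix (Fin n) (Fin n) ℝ) : ℝ :=
  ⨅ v : {v : Fin n → ℝ // ∑ i, (v i) ^ 2 = 1}, ∑ i, A.mulVec v.1 i * v.1 i

/-- The dual activation `Q(x) = (√(1-x²) + (π - arccos x)·x)/π` of ReLU. -/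
def Qf (x : ℝ) : ℝ := (Real.sqrt (1 - x ^ 2) + (Real.pi - Real.arccos x) * x) / Real.pi

/-- Expectation of `φ(u)·φ(v)` for `(u,v)` a centered Gaussian vector with
covariance `[[a, c], [c, b]]`, written via the representation `u = √a·g₁`,
`v = (c/√a)·g₁ + √(b - c²/a)·g₂` with `g₁, g₂` i.i.d. standard Gaussians. -/
def gaussRelu2 (a b c : ℝ) : ℝ :=
  ∫ p : ℝ × ℝ, relu (Real.sqrt a * p.1) *
      relu (c / Real.sqrt a * p.1 + Real.sqrt (b - c ^ 2 / a) * p.2)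
    ∂((gaussianReal 0 1).prod (gaussianReal 0 1))

/-- The population Gram matrices `K^{(l)}`, defined recursively from the
pairwise input correlations `c i j = xᵢᵀxⱼ/d`:  `K^{(0)} = 0` and
`K^{(l)}_{ij} = 2·E[φ(u)φ(v)]` for `(u,v) ~ N(0, Λ^{(l)}_{ij})`. -/
def popGram {n : ℕ} (sw2 : ℝ) (c : Fin n → Fin n → ℝ) : ℕ → Matrix (Fin n) (Fin n) ℝ
  | 0 => 0
  | l + 1 => Matrix.of fun i j =>
      2 * gaussRelu2 (sw2 * popGram sw2 c l i i + 1) (sw2 * popGram sw2 c l j j + 1)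
        (sw2 * popGram sw2 c l i j + c i j)

/-- The iterates `Z^{(0)} = 0`, `Z^{(l+1)} = φ(W Z^{(l)} + U X)`. -/
def Zit {m d n : ℕ} (W : Matrix (Fin m) (Fin m) ℝ) (U : Matrix (Fin m) (Fin d) ℝ)
    (X : Matrix (Fin d) (Fin n) ℝ) : ℕ → Matrix (Fin m) (Fin n) ℝ
  | 0 => 0
  | l + 1 => reluM (W * Zit W U X l + U * X)

end


noncomputable section QAux
open Real Set Finset Matrix

namespace QSeries


/-- normalized central binomial coefficient -/
def cbq (k : ℕ) : ℝ := (Nat.centralBinom k : ℝ) / 4 ^ k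

lemma cbq_pos (k : ℕ) : 0 < cbq k :=
  div_pos (by exact_mod_cast k.centralBinom_pos) (by positivity)

lemma cbq_succ (k : ℕ) : cbq (k + 1) * (2 * k + 2) = cbq k * (2 * k + 1) := by
  have h := Nat.succ_mul_centralBinom_succ k
  have h' : ((k : ℝ) + 1) * ((k + 1).centralBinom : ℝ) = 2 * (2 * k + 1) * (k.centralBinom : ℝ) := by
    exact_mod_cast congrArg (fun m : ℕ => (m : ℝ)) h
  have h4 : (4 : ℝ) ^ (k + 1) = 4 ^ k * 4 := by ring
  unfold cbq
  rw [h4]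
  field_simp
  nlinarith [h', pow_pos (show (0:ℝ) < 4 by norm_num) k]

lemma cbq_le_one (k : ℕ) : cbq k ≤ 1 := by
  induction k with
  | zero => simp [cbq, Nat.centralBinom]
  | succ k ih =>
      have h := cbq_succ k
      have h2 : (0:ℝ) < 2 * k + 2 := by positivity
      have hk := cbq_pos k
      nlinarith




lemma summable_poly_geom {r : ℝ} (hr : |r| < 1) :
    Summable (fun k : ℕ => (2 * (k : ℝ) + 2) * r ^ (2 * k)) := by
  have hr2 : ‖r ^ 2‖ < 1 := by
    rw [Real.norm_eq_abs, abs_pow]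
    exact pow_lt_one₀ (abs_nonneg r) hr (by norm_num)
  have h1 : Summable (fun k : ℕ => ((k : ℝ)) ^ 1 * (r ^ 2) ^ k) :=
    summable_pow_mul_geometric_of_norm_lt_one 1 hr2
  have h0 : Summable (fun k : ℕ => ((k : ℝ)) ^ 0 * (r ^ 2) ^ k) :=
    summable_pow_mul_geometric_of_norm_lt_one 0 hr2
  refine ((h1.mul_left 2).add (h0.mul_left 2)).congr fun k => ?_
  rw [← pow_mul]
  ring

lemma summable_geom' {r : ℝ} (hr : |r| < 1) :
    Summable (fun k : ℕ => r ^ (2 * k)) := by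
  have hr2 : ‖r ^ 2‖ < 1 := by
    rw [Real.norm_eq_abs, abs_pow]
    exact pow_lt_one₀ (abs_nonneg r) hr (by norm_num)
  exact (summable_geometric_of_norm_lt_one hr2).congr fun k => by rw [← pow_mul]

lemma summable_terms (a : ℕ → ℝ) (ha : ∀ k, |a k| ≤ 1) (m : ℕ → ℕ)
    (hm1 : ∀ k, 2 * k ≤ m k) {x : ℝ} (hx : |x| < 1) :
    Summable fun k => a k * x ^ m k := by
  refine Summable.of_abs (Summable.of_nonneg_of_le (fun k => abs_nonneg _) (fun k => ?_)
    (summable_geom' (r := |x|) (by rwa [abs_abs])))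
  rw [abs_mul, abs_pow]
  have h1 : |x| ^ m k ≤ |x| ^ (2 * k) :=
    pow_le_pow_of_le_one (abs_nonneg x) hx.le (hm1 k)
  have h2 : |a k| * |x| ^ m k ≤ 1 * |x| ^ (2 * k) :=
    mul_le_mul (ha k) h1 (by positivity) zero_le_one
  simpa using h2

lemma summable_deriv_terms (a : ℕ → ℝ) (ha : ∀ k, |a k| ≤ 1) (m : ℕ → ℕ)
    (hm1 : ∀ k, 2 * k ≤ m k) (hm2 : ∀ k, m k ≤ 2 * k + 2) {x : ℝ} (hx : |x| < 1) :
    Summable fun k => a k * ((m k : ℝ) * x ^ (m k - 1)) := by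
  have hbd : Summable (fun k : ℕ => (2 * (k:ℝ) + 2) * |x| ^ (2 * k - 1)) := by
    rw [← summable_nat_add_iff 1]
    have h := summable_poly_geom (r := |x|) (by rwa [abs_abs])
    refine Summable.of_nonneg_of_le (fun k => by positivity) (fun k => ?_)
      ((h.mul_left 2).mul_left 2)
    have he : 2 * (k + 1) - 1 = 2 * k + 1 := by omega
    rw [he]
    have hxle : |x| ^ (2*k+1) ≤ |x| ^ (2*k) := pow_le_pow_of_le_one (abs_nonneg x) hx.le (by omega)
    push_cast
    nlinarith [pow_nonneg (abs_nonneg x) (2*k), pow_nonneg (abs_nonneg x) (2*k+1)]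
  refine Summable.of_abs (Summable.of_nonneg_of_le (fun k => abs_nonneg _) (fun k => ?_) hbd)
  calc |a k * ((m k : ℝ) * x ^ (m k - 1))|
      = |a k| * ((m k : ℝ) * |x| ^ (m k - 1)) := by
        rw [abs_mul, abs_mul, abs_pow, Nat.abs_cast]
    _ ≤ 1 * ((2 * (k:ℝ) + 2) * |x| ^ (2 * k - 1)) := by
        refine mul_le_mul (ha k) ?_ (by positivity) zero_le_one
        refine mul_le_mul ?_ ?_ (by positivity) (by positivity)
        · have := hm2 k
          push_cast
          exact_mod_cast this
        · exact pow_le_pow_of_le_one (abs_nonneg x) hx.le (by have := hm1 k; omega)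
    _ = (2 * (k:ℝ) + 2) * |x| ^ (2 * k - 1) := one_mul _

/-- generic term-by-term differentiation on `|x| < 1` -/
lemma hasDerivAt_series (a : ℕ → ℝ) (ha : ∀ k, |a k| ≤ 1) (m : ℕ → ℕ)
    (hm1 : ∀ k, 2 * k ≤ m k) (hm2 : ∀ k, m k ≤ 2 * k + 2) {x : ℝ} (hx : |x| < 1) :
    HasDerivAt (fun y => ∑' k, a k * y ^ m k)
      (∑' k, a k * ((m k : ℝ) * x ^ (m k - 1))) x := by
  set r : ℝ := (1 + |x|) / 2 with hr
  have hxr : |x| < r := by rw [hr]; linarith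
  have hr0 : 0 < r := lt_of_le_of_lt (abs_nonneg x) hxr
  have hr1 : r < 1 := by rw [hr]; linarith
  have hrabs : |r| < 1 := by rwa [abs_of_pos hr0]
  have hmem : x ∈ Ioo (-r) r := by
    constructor
    · linarith [neg_abs_le x]
    · linarith [le_abs_self x]
  refine hasDerivAt_tsum_of_isPreconnected
    (u := fun k : ℕ => (2 * (k:ℝ) + 2) * r ^ (2 * k) / r)
    (g := fun (k : ℕ) (y : ℝ) => a k * y ^ m k)
    (g' := fun (k : ℕ) (y : ℝ) => a k * ((m k : ℝ) * y ^ (m k - 1)))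
    ((summable_poly_geom hrabs).div_const r) (isOpen_Ioo (a := -r) (b := r))
    (convex_Ioo _ _).isPreconnected
    (fun k y _ => (hasDerivAt_pow (m k) y).const_mul (a k))
    (fun k y hy => ?_) hmem
    (summable_terms a ha m hm1 hx) hmem
  -- derivative bound on Ioo (-r) r
  have hyr : |y| < r := abs_lt.mpr ⟨hy.1, hy.2⟩
  have hy1 : |y| < 1 := hyr.trans hr1
  rw [Real.norm_eq_abs]
  calc |a k * ((m k : ℝ) * y ^ (m k - 1))|
      = |a k| * ((m k : ℝ) * |y| ^ (m k - 1)) := by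
        rw [abs_mul, abs_mul, abs_pow, Nat.abs_cast]
    _ ≤ 1 * ((2 * (k:ℝ) + 2) * r ^ (2 * k - 1)) := by
        refine mul_le_mul (ha k) ?_ (by positivity) zero_le_one
        refine mul_le_mul ?_ ?_ (by positivity) (by positivity)
        · have := hm2 k; push_cast; exact_mod_cast this
        · calc |y| ^ (m k - 1) ≤ |y| ^ (2 * k - 1) :=
                pow_le_pow_of_le_one (abs_nonneg y) hy1.le (by have := hm1 k; omega)
            _ ≤ r ^ (2 * k - 1) := pow_le_pow_left₀ (abs_nonneg y) hyr.le _
    _ ≤ (2 * (k:ℝ) + 2) * r ^ (2 * k) / r := by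
        rw [one_mul, div_eq_mul_inv, mul_assoc]
        refine mul_le_mul_of_nonneg_left ?_ (by positivity)
        rcases Nat.eq_zero_or_pos k with hk | hk
        · subst hk
          norm_num
          exact (one_le_inv₀ hr0).mpr hr1.le
        · have he : 2 * k = 2 * k - 1 + 1 := by omega
          rw [he, pow_succ, mul_assoc, mul_inv_cancel₀ (ne_of_gt hr0), mul_one,
            Nat.add_sub_cancel]


def vcq (k : ℕ) : ℝ := cbq k / (2 * k + 1)
def bcq (k : ℕ) : ℝ := cbq k / ((2 * k + 1) * (2 * k + 2))

lemma vcq_pos (k : ℕ) : 0 < vcq k := div_pos (cbq_pos k) (by positivity)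
lemma bcq_pos (k : ℕ) : 0 < bcq k := div_pos (cbq_pos k) (by positivity)

lemma vcq_le_one (k : ℕ) : vcq k ≤ 1 := by
  rw [vcq, div_le_one (by positivity)]
  have := cbq_le_one k; linarith

lemma bcq_le_one (k : ℕ) : bcq k ≤ 1 := by
  rw [bcq, div_le_one (by positivity)]
  have := cbq_le_one k
  nlinarith [cbq_pos k]

lemma abs_cbq_le_one (k : ℕ) : |cbq k| ≤ 1 := by
  rw [abs_of_pos (cbq_pos k)]; exact cbq_le_one k
lemma abs_vcq_le_one (k : ℕ) : |vcq k| ≤ 1 := by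
  rw [abs_of_pos (vcq_pos k)]; exact vcq_le_one k
lemma abs_bcq_le_one (k : ℕ) : |bcq k| ≤ 1 := by
  rw [abs_of_pos (bcq_pos k)]; exact bcq_le_one k

lemma bcq_summable : Summable bcq := by
  have h2 : Summable (fun n : ℕ => (1 : ℝ) / (n + 1) ^ 2) := by
    have := Real.summable_one_div_nat_pow.mpr (le_refl 2)
    have h := (summable_nat_add_iff (f := fun n : ℕ => (1:ℝ) / (n:ℝ) ^ 2) 1).mpr this
    refine h.congr fun n => by push_cast; ring
  refine Summable.of_nonneg_of_le (fun k => (bcq_pos k).le) (fun k => ?_) h2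
  rw [bcq, div_le_div_iff₀ (by positivity) (by positivity)]
  have := cbq_le_one k
  have h1 : ((k:ℝ) + 1) ^ 2 ≤ (2 * k + 1) * (2 * k + 2) := by nlinarith [Nat.cast_nonneg (α := ℝ) k]
  nlinarith [cbq_pos k, Nat.cast_nonneg (α := ℝ) k]

/-- The three power series. -/
def Gser (x : ℝ) : ℝ := ∑' k, cbq k * x ^ (2 * k)
def Vser (x : ℝ) : ℝ := ∑' k, vcq k * x ^ (2 * k + 1)
def Wser (x : ℝ) : ℝ := ∑' k, bcq k * x ^ (2 * k + 2)

lemma summable_W {x : ℝ} (hx : |x| ≤ 1) : Summable fun k => bcq k * x ^ (2 * k + 2) := by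
  refine Summable.of_abs (Summable.of_nonneg_of_le (fun k => abs_nonneg _) (fun k => ?_)
    bcq_summable)
  rw [abs_mul, abs_pow, abs_of_pos (bcq_pos k)]
  calc bcq k * |x| ^ (2*k+2) ≤ bcq k * 1 := by
        refine mul_le_mul_of_nonneg_left ?_ (bcq_pos k).le
        exact pow_le_one₀ (abs_nonneg x) hx
    _ = bcq k := mul_one _

lemma summable_quad_bound {x : ℝ} (hx : |x| < 1) (f : ℕ → ℝ)
    (hb : ∀ k, |f k| ≤ (2 * (k:ℝ) + 2) * |x| ^ (2 * k)) : Summable f :=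
  Summable.of_abs (Summable.of_nonneg_of_le (fun k => abs_nonneg _) hb
    (summable_poly_geom (r := |x|) (by rwa [abs_abs])))

/-- ODE for `Gser`. -/
lemma Gser_ode {x : ℝ} (hx : |x| < 1) :
    (∑' k, cbq k * ((((2*k : ℕ)) : ℝ) * x ^ (2*k - 1))) * (1 - x ^ 2) = x * Gser x := by
  have hx1 : |x| ≤ 1 := hx.le
  have hpow : ∀ k : ℕ, |x| ^ (2*k+1) ≤ |x| ^ (2*k) :=
    fun k => pow_le_pow_of_le_one (abs_nonneg x) hx1 (by omega)
  have hS1 : Summable (fun k => cbq k * (2*(k:ℝ)+1) * x ^ (2*k+1)) := by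
    refine summable_quad_bound hx _ fun k => ?_
    rw [abs_mul, abs_mul, abs_pow, abs_of_pos (cbq_pos k), abs_of_pos (by positivity : (0:ℝ) < 2*(k:ℝ)+1)]
    calc cbq k * (2*(k:ℝ)+1) * |x| ^ (2*k+1) ≤ 1 * (2*(k:ℝ)+2) * |x| ^ (2*k) := by
          refine mul_le_mul (by nlinarith [cbq_le_one k, cbq_pos k, Nat.cast_nonneg (α := ℝ) k]) (hpow k) (by positivity) (by positivity)
      _ = (2*(k:ℝ)+2) * |x| ^ (2*k) := by ring
  have hS2 : Summable (fun k => cbq k * (2*(k:ℝ)) * x ^ (2*k+1)) := by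
    refine summable_quad_bound hx _ fun k => ?_
    rw [abs_mul, abs_mul, abs_pow, abs_of_pos (cbq_pos k), abs_of_nonneg (by positivity : (0:ℝ) ≤ 2*(k:ℝ))]
    calc cbq k * (2*(k:ℝ)) * |x| ^ (2*k+1) ≤ 1 * (2*(k:ℝ)+2) * |x| ^ (2*k) := by
          refine mul_le_mul (by nlinarith [cbq_le_one k, cbq_pos k, Nat.cast_nonneg (α := ℝ) k]) (hpow k) (by positivity) (by positivity)
      _ = (2*(k:ℝ)+2) * |x| ^ (2*k) := by ring
  have hSd : Summable (fun k => cbq k * (((2*k : ℕ) : ℝ) * x ^ (2*k - 1))) :=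
    summable_deriv_terms cbq abs_cbq_le_one (fun k => 2*k) (fun k => le_refl _)
      (fun k => Nat.le_add_right _ 2) hx
  have step1 : (∑' k, cbq k * ((((2*k : ℕ)) : ℝ) * x ^ (2*k - 1)))
      = ∑' k, cbq k * (2*(k:ℝ)+1) * x ^ (2*k+1) := by
    rw [Summable.tsum_eq_zero_add hSd]
    have h0 : cbq 0 * ((((2*0 : ℕ)) : ℝ) * x ^ (2*0 - 1)) = 0 := by norm_num
    rw [h0, zero_add]
    refine tsum_congr fun k => ?_
    have hc : (((2*(k+1) : ℕ)) : ℝ) = 2*(k:ℝ)+2 := by push_cast; ring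
    have he : 2*(k+1) - 1 = 2*k+1 := by omega
    rw [hc, he, show cbq (k+1) * ((2*(k:ℝ)+2) * x ^ (2*k+1))
        = (cbq (k+1) * (2*(k:ℝ)+2)) * x ^ (2*k+1) by ring, cbq_succ k]
  have step2 : (∑' k, cbq k * ((((2*k : ℕ)) : ℝ) * x ^ (2*k - 1))) * x ^ 2
      = ∑' k, cbq k * (2*(k:ℝ)) * x ^ (2*k+1) := by
    rw [← tsum_mul_right]
    refine tsum_congr fun k => ?_
    rcases Nat.eq_zero_or_pos k with hk | hk
    · subst hk; norm_num
    · have he : 2*k - 1 + 2 = 2*k + 1 := by omega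
      have hxp : x ^ (2*k-1) * x ^ 2 = x ^ (2*k+1) := by rw [← pow_add, he]
      push_cast
      linear_combination (cbq k * (2*(k:ℝ))) * hxp
  calc (∑' k, cbq k * ((((2*k : ℕ)) : ℝ) * x ^ (2*k - 1))) * (1 - x ^ 2)
      = (∑' k, cbq k * ((((2*k : ℕ)) : ℝ) * x ^ (2*k - 1)))
        - (∑' k, cbq k * ((((2*k : ℕ)) : ℝ) * x ^ (2*k - 1))) * x ^ 2 := by ring
    _ = (∑' k, cbq k * (2*(k:ℝ)+1) * x ^ (2*k+1)) - ∑' k, cbq k * (2*(k:ℝ)) * x ^ (2*k+1) := by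
        rw [step2, step1]
    _ = ∑' k, (cbq k * (2*(k:ℝ)+1) * x ^ (2*k+1) - cbq k * (2*(k:ℝ)) * x ^ (2*k+1)) :=
        (Summable.tsum_sub hS1 hS2).symm
    _ = ∑' k, x * (cbq k * x ^ (2*k)) := by
        refine tsum_congr fun k => ?_
        rw [pow_succ]
        ring
    _ = x * Gser x := tsum_mul_left

/-- helper: functions with the same derivative on `Ioo (-1) 1` agreeing at `0` agree. -/
lemma eq_on_Ioo {f g φ : ℝ → ℝ}
    (hf : ∀ x ∈ Ioo (-1:ℝ) 1, HasDerivAt f (φ x) x)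
    (hg : ∀ x ∈ Ioo (-1:ℝ) 1, HasDerivAt g (φ x) x)
    (h0 : f 0 = g 0) {x : ℝ} (hx : x ∈ Ioo (-1:ℝ) 1) : f x = g x := by
  have hd : ∀ y ∈ Ioo (-1:ℝ) 1, HasDerivAt (fun z => f z - g z) 0 y := fun y hy => by
    have h := (hf y hy).sub (hg y hy); rwa [sub_self] at h
  have hsub : Icc (min x 0) (max x 0) ⊆ Ioo (-1:ℝ) 1 := by
    intro z hz
    constructor
    · have h1 : -1 < min x 0 := lt_min hx.1 (by norm_num)
      linarith [hz.1]
    · have h2 : max x 0 < 1 := max_lt hx.2 one_pos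
      linarith [hz.2]
  have key := constant_of_has_deriv_right_zero (f := fun z => f z - g z)
    (a := min x 0) (b := max x 0)
    (fun z hz => ((hd z (hsub hz)).continuousAt.continuousWithinAt))
    (fun z hz => (hd z (hsub (Ico_subset_Icc_self hz))).hasDerivWithinAt)
  have k1 := key x ⟨min_le_left _ _, le_max_left _ _⟩
  have k2 := key 0 ⟨min_le_right _ _, le_max_right _ _⟩
  beta_reduce at k1 k2
  linarith

lemma hasDerivAt_sqrt_one_sub_sq {x : ℝ} (hx : x ∈ Ioo (-1:ℝ) 1) :
    HasDerivAt (fun y => Real.sqrt (1 - y^2)) (-x / Real.sqrt (1 - x^2)) x := by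
  have h2 : (0:ℝ) < 1 - x^2 := by nlinarith [hx.1, hx.2]
  have hs : Real.sqrt (1 - x^2) ≠ 0 := ne_of_gt (Real.sqrt_pos.mpr h2)
  have hinner : HasDerivAt (fun y : ℝ => 1 - y^2) (-(2*x)) x := by
    simpa using ((hasDerivAt_pow 2 x).const_sub 1)
  have hcomp := (Real.hasDerivAt_sqrt (ne_of_gt h2)).comp x hinner
  refine hcomp.congr_deriv (Eq.symm ?_)
  field_simp

lemma Gser_zero : Gser 0 = 1 := by
  rw [Gser, tsum_eq_single 0]
  · norm_num [cbq, Nat.centralBinom]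
  · intro k hk
    have : 2 * k ≠ 0 := by omega
    rw [zero_pow this, mul_zero]

lemma hasDerivAt_Gser {x : ℝ} (hx : |x| < 1) :
    HasDerivAt Gser (∑' k, cbq k * ((((2*k : ℕ)) : ℝ) * x ^ (2*k - 1))) x :=
  hasDerivAt_series cbq abs_cbq_le_one (fun k => 2*k) (fun k => le_refl _)
    (fun k => Nat.le_add_right _ 2) hx

lemma hasDerivAt_Vser {x : ℝ} (hx : |x| < 1) : HasDerivAt Vser (Gser x) x := by
  have h := hasDerivAt_series vcq abs_vcq_le_one (fun k => 2*k+1) (fun k => Nat.le_succ _)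
    (fun k => Nat.le_succ _) hx
  refine h.congr_deriv (Eq.symm ?_)
  rw [Gser]
  refine tsum_congr fun k => ?_
  have he : 2*k+1 - 1 = 2*k := by omega
  have hc : (((2*k+1 : ℕ)) : ℝ) = 2*(k:ℝ)+1 := by push_cast; ring
  rw [he, hc, vcq]
  field_simp

lemma hasDerivAt_Wser {x : ℝ} (hx : |x| < 1) : HasDerivAt Wser (Vser x) x := by
  have h := hasDerivAt_series bcq abs_bcq_le_one (fun k => 2*k+2) (fun k => Nat.le_add_right _ 2)
    (fun k => le_refl _) hx
  refine h.congr_deriv (Eq.symm ?_)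
  rw [Vser]
  refine tsum_congr fun k => ?_
  have he : 2*k+2 - 1 = 2*k+1 := by omega
  have hc : (((2*k+2 : ℕ)) : ℝ) = 2*(k:ℝ)+2 := by push_cast; ring
  rw [he, hc, vcq, bcq]
  field_simp

lemma Gser_eq {x : ℝ} (hx : x ∈ Ioo (-1:ℝ) 1) : Gser x * Real.sqrt (1 - x^2) = 1 := by
  refine eq_on_Ioo (f := fun y => Gser y * Real.sqrt (1 - y^2)) (g := fun _ => 1)
    (φ := fun _ => 0) ?_ (fun y _ => hasDerivAt_const y 1) ?_ hx
  · intro y hy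
    have hy1 : |y| < 1 := abs_lt.mpr ⟨hy.1, hy.2⟩
    have h2 : (0:ℝ) < 1 - y^2 := by nlinarith [hy.1, hy.2]
    have hs : Real.sqrt (1 - y^2) ≠ 0 := ne_of_gt (Real.sqrt_pos.mpr h2)
    have hprod := (hasDerivAt_Gser hy1).mul (hasDerivAt_sqrt_one_sub_sq hy)
    refine hprod.congr_deriv ?_
    have hode := Gser_ode hy1
    have hsq : Real.sqrt (1 - y^2) * Real.sqrt (1 - y^2) = 1 - y^2 :=
      Real.mul_self_sqrt h2.le
    have h3 : (∑' k, cbq k * ((((2*k : ℕ)) : ℝ) * y ^ (2*k-1))) * Real.sqrt (1 - y^2)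
        = y * Gser y / Real.sqrt (1 - y^2) := by
      rw [eq_div_iff hs, mul_assoc, hsq, hode]
    rw [h3]
    field_simp
    ring
  · simp [Gser_zero]

lemma Vser_zero : Vser 0 = 0 := by
  rw [Vser]
  convert tsum_zero with k
  rw [zero_pow (by omega : 2*k+1 ≠ 0), mul_zero]

lemma Vser_eq {x : ℝ} (hx : x ∈ Ioo (-1:ℝ) 1) : Vser x = Real.arcsin x := by
  refine eq_on_Ioo (f := Vser) (g := Real.arcsin) (φ := Gser) ?_ ?_ ?_ hx
  · intro y hy
    exact hasDerivAt_Vser (abs_lt.mpr ⟨hy.1, hy.2⟩)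
  · intro y hy
    have h2 : (0:ℝ) < 1 - y^2 := by nlinarith [hy.1, hy.2]
    have := Real.hasDerivAt_arcsin (ne_of_gt hy.1) (ne_of_lt hy.2)
    have hGy : Gser y = 1 / Real.sqrt (1 - y^2) := by
      have hG := Gser_eq hy
      have hs : Real.sqrt (1 - y^2) ≠ 0 := ne_of_gt (Real.sqrt_pos.mpr h2)
      field_simp at hG ⊢
      linarith
    rw [hGy]
    exact this
  · simp [Vser_zero]

lemma Wser_zero : Wser 0 = 0 := by
  rw [Wser]
  convert tsum_zero with k
  rw [zero_pow (by omega : 2*k+2 ≠ 0), mul_zero]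

lemma Wser_eq {x : ℝ} (hx : x ∈ Ioo (-1:ℝ) 1) :
    Wser x = Real.sqrt (1 - x^2) + x * Real.arcsin x - 1 := by
  refine eq_on_Ioo (f := Wser)
    (g := fun y => Real.sqrt (1 - y^2) + y * Real.arcsin y - 1) (φ := Vser) ?_ ?_ ?_ hx
  · intro y hy
    exact hasDerivAt_Wser (abs_lt.mpr ⟨hy.1, hy.2⟩)
  · intro y hy
    have h2 : (0:ℝ) < 1 - y^2 := by nlinarith [hy.1, hy.2]
    have hs : Real.sqrt (1 - y^2) ≠ 0 := ne_of_gt (Real.sqrt_pos.mpr h2)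
    have ha := Real.hasDerivAt_arcsin (ne_of_gt hy.1) (ne_of_lt hy.2)
    have hid : HasDerivAt (fun z : ℝ => z) 1 y := hasDerivAt_id y
    have hmul := hid.mul ha
    have hsum := ((hasDerivAt_sqrt_one_sub_sq hy).add hmul).sub_const 1
    have hsq : Real.sqrt (1 - y^2) * Real.sqrt (1 - y^2) = 1 - y^2 :=
      Real.mul_self_sqrt h2.le
    refine hsum.congr_deriv (Eq.symm ?_)
    rw [Vser_eq hy]
    field_simp
    linear_combination
  · norm_num [Wser_zero]

/-- The main series identity for `Qf` on the open interval, stated with `Wser`. -/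
lemma Qf_eq_Ioo {x : ℝ} (hx : x ∈ Ioo (-1:ℝ) 1) :
    Qf x = 1/Real.pi + x/2 + Wser x / Real.pi := by
  have hW := Wser_eq hx
  have hpi := Real.pi_pos
  rw [Qf, Real.arccos_eq_pi_div_two_sub_arcsin, hW]
  field_simp
  ring


lemma Qf_cont : Continuous Qf := by
  unfold Qf
  refine Continuous.div_const (Continuous.add ?_ ?_) _
  · exact Real.continuous_sqrt.comp (by continuity)
  · exact (continuous_const.sub Real.continuous_arccos).mul continuous_id

lemma Wser_contOn : ContinuousOn Wser (Icc (-1:ℝ) 1) := by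
  refine continuousOn_tsum (fun k => (Continuous.continuousOn (by continuity))) bcq_summable
    (fun k x hx => ?_)
  have hx1 : |x| ≤ 1 := abs_le.mpr ⟨hx.1, hx.2⟩
  rw [Real.norm_eq_abs, abs_mul, abs_pow, abs_of_pos (bcq_pos k)]
  calc bcq k * |x| ^ (2*k+2) ≤ bcq k * 1 :=
        mul_le_mul_of_nonneg_left (pow_le_one₀ (abs_nonneg x) hx1) (bcq_pos k).le
    _ = bcq k := mul_one _

lemma Qf_eq_Icc {x : ℝ} (hx : x ∈ Icc (-1:ℝ) 1) :
    Qf x = 1/Real.pi + x/2 + Wser x / Real.pi := by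
  have hclos : Icc (-1:ℝ) 1 ⊆ closure (Ioo (-1:ℝ) 1) := by
    rw [closure_Ioo (by norm_num : (-1:ℝ) ≠ 1)]
  have hcont2 : ContinuousOn (fun y => 1/Real.pi + y/2 + Wser y / Real.pi) (Icc (-1:ℝ) 1) := by
    refine ContinuousOn.add (ContinuousOn.add continuousOn_const ?_) ?_
    · exact (continuous_id.div_const 2).continuousOn
    · exact Wser_contOn.div_const _
  exact Set.EqOn.of_subset_closure (fun y hy => Qf_eq_Ioo hy) Qf_cont.continuousOn hcont2
    Ioo_subset_Icc_self hclos hx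

lemma hasDerivAt_Qf {x : ℝ} (hx : x ∈ Ioo (-1:ℝ) 1) :
    HasDerivAt Qf ((Real.pi - Real.arccos x) / Real.pi) x := by
  have h2 : (0:ℝ) < 1 - x^2 := by nlinarith [hx.1, hx.2]
  have hs : Real.sqrt (1 - x^2) ≠ 0 := ne_of_gt (Real.sqrt_pos.mpr h2)
  have ha := Real.hasDerivAt_arccos (ne_of_gt hx.1) (ne_of_lt hx.2)
  have h3 : HasDerivAt (fun y => Real.pi - Real.arccos y) (1 / Real.sqrt (1 - x^2)) x := by
    have := ha.const_sub Real.pi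
    refine this.congr_deriv (Eq.symm ?_)
    ring
  have h4 := h3.mul (hasDerivAt_id x)
  have h5 := ((hasDerivAt_sqrt_one_sub_sq hx).add h4).div_const Real.pi
  have hQ : Qf = fun y => (Real.sqrt (1 - y^2) + (Real.pi - Real.arccos y) * y) / Real.pi := by
    funext y; rw [Qf]
  rw [hQ]
  refine h5.congr_deriv (Eq.symm ?_)
  have hsq : Real.sqrt (1 - x^2) * Real.sqrt (1 - x^2) = 1 - x^2 :=
    Real.mul_self_sqrt h2.le
  field_simp
  simp only [id_eq]
  ring

lemma Qf_mono : MonotoneOn Qf (Icc (-1:ℝ) 1) := by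
  refine monotoneOn_of_deriv_nonneg (convex_Icc _ _) Qf_cont.continuousOn
    (fun x hx => ?_) (fun x hx => ?_)
  · rw [interior_Icc] at hx
    exact (hasDerivAt_Qf hx).differentiableAt.differentiableWithinAt
  · rw [interior_Icc] at hx
    rw [(hasDerivAt_Qf hx).deriv]
    exact div_nonneg (by linarith [Real.arccos_le_pi x]) Real.pi_pos.le
  
lemma id_sub_Qf_mono : MonotoneOn (fun y => y - Qf y) (Icc (-1:ℝ) 1) := by
  refine monotoneOn_of_deriv_nonneg (convex_Icc _ _)
    (continuous_id.sub Qf_cont).continuousOn (fun x hx => ?_) (fun x hx => ?_)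
  · rw [interior_Icc] at hx
    exact ((hasDerivAt_id x).sub (hasDerivAt_Qf hx)).differentiableAt.differentiableWithinAt
  · rw [interior_Icc] at hx
    have hd : HasDerivAt (fun y => y - Qf y) (1 - (Real.pi - Real.arccos x) / Real.pi) x :=
      (hasDerivAt_id x).sub (hasDerivAt_Qf hx)
    rw [hd.deriv, sub_nonneg, div_le_one Real.pi_pos]
    linarith [Real.arccos_nonneg x]

lemma Qf_one : Qf 1 = 1 := by
  rw [Qf]
  norm_num [Real.arccos_one]

lemma Qf_neg_one : Qf (-1) = 0 := by
  rw [Qf]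
  norm_num [Real.arccos_neg_one]

lemma Qf_zero : Qf 0 = 1 / Real.pi := by
  rw [Qf]
  norm_num

lemma Qf_nonneg {x : ℝ} (hx : x ∈ Icc (-1:ℝ) 1) : 0 ≤ Qf x := by
  have := Qf_mono (show (-1:ℝ) ∈ Icc (-1:ℝ) 1 by norm_num) hx hx.1
  rw [Qf_neg_one] at this
  exact this

lemma Qf_le_one {x : ℝ} (hx : x ∈ Icc (-1:ℝ) 1) : Qf x ≤ 1 := by
  have := Qf_mono hx (show (1:ℝ) ∈ Icc (-1:ℝ) 1 by norm_num) hx.2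
  rwa [Qf_one] at this

lemma Qf_lipschitz {a b : ℝ} (ha : a ∈ Icc (-1:ℝ) 1) (hb : b ∈ Icc (-1:ℝ) 1) :
    |Qf a - Qf b| ≤ |a - b| := by
  rcases le_total a b with h | h
  · have h1 := Qf_mono ha hb h
    have h2 := id_sub_Qf_mono ha hb h
    simp only [] at h2
    rw [abs_sub_comm, abs_sub_comm a b, abs_of_nonneg (by linarith), abs_of_nonneg (by linarith)]
    linarith
  · have h1 := Qf_mono hb ha h
    have h2 := id_sub_Qf_mono hb ha h
    simp only [] at h2
    rw [abs_of_nonneg (by linarith), abs_of_nonneg (by linarith)]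
    linarith


lemma dot_eq_quad {n : ℕ} (A : Matrix (Fin n) (Fin n) ℝ) (v : Fin n → ℝ) :
    dotProduct (star v) (A.mulVec v) = ∑ i, ∑ j, v i * v j * A i j := by
  simp only [dotProduct, Matrix.mulVec, Pi.star_apply, star_trivial]
  refine Finset.sum_congr rfl fun i _ => ?_
  rw [Finset.mul_sum]
  exact Finset.sum_congr rfl fun j _ => by ring

lemma quad_of_posSemidef {n : ℕ} {A : Matrix (Fin n) (Fin n) ℝ} (hA : A.PosSemidef)
    (v : Fin n → ℝ) : 0 ≤ ∑ i, ∑ j, v i * v j * A i j := by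
  rw [← dot_eq_quad]
  exact hA.dotProduct_mulVec_nonneg v

lemma posSemidef_of_quad {n : ℕ} {A : Matrix (Fin n) (Fin n) ℝ}
    (hs : ∀ i j, A i j = A j i)
    (hq : ∀ v : Fin n → ℝ, 0 ≤ ∑ i, ∑ j, v i * v j * A i j) : A.PosSemidef := by
  refine Matrix.PosSemidef.of_dotProduct_mulVec_nonneg ?_ ?_
  · ext i j
    simp only [Matrix.conjTranspose_apply, star_trivial]
    exact hs j i
  · intro v
    rw [dot_eq_quad]
    exact hq v

lemma quad_pow_nonneg {n : ℕ} {A : Matrix (Fin n) (Fin n) ℝ} (hA : A.PosSemidef) (m : ℕ)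
    (v : Fin n → ℝ) : 0 ≤ ∑ i, ∑ j, v i * v j * A i j ^ m := by
  obtain ⟨B, rfl⟩ : ∃ B : Matrix (Fin n) (Fin n) ℝ, A = B.conjTranspose * B := by
    open scoped MatrixOrder in
    exact ⟨CFC.sqrt A, by rw [← Matrix.star_eq_conjTranspose, (IsSelfAdjoint.of_nonneg (CFC.sqrt_nonneg A)).star_eq, CFC.sqrt_mul_sqrt_self A hA.nonneg]⟩
  have hentry : ∀ i j, (B.conjTranspose * B) i j = ∑ r, B r i * B r j := by
    intro i j
    simp [Matrix.mul_apply, Matrix.conjTranspose_apply]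
  have key : ∀ i j, ((B.conjTranspose * B) i j) ^ m
      = ∑ p ∈ Fintype.piFinset (fun _ : Fin m => (Finset.univ : Finset (Fin n))),
          (∏ t, B (p t) i) * (∏ t, B (p t) j) := by
    intro i j
    rw [hentry, Finset.sum_pow']
    exact Finset.sum_congr rfl fun p _ => Finset.prod_mul_distrib
  have step : (∑ i, ∑ j, v i * v j * ((B.conjTranspose * B) i j) ^ m)
      = ∑ p ∈ Fintype.piFinset (fun _ : Fin m => (Finset.univ : Finset (Fin n))),
          (∑ i, v i * ∏ t, B (p t) i) ^ 2 := by
    have h1 : (∑ i, ∑ j, v i * v j * ((B.conjTranspose * B) i j) ^ m)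
        = ∑ i, ∑ p ∈ Fintype.piFinset (fun _ : Fin m => (Finset.univ : Finset (Fin n))),
            (v i * ∏ t, B (p t) i) * ∑ j, v j * ∏ t, B (p t) j := by
      refine Finset.sum_congr rfl fun i _ => ?_
      calc ∑ j, v i * v j * ((B.conjTranspose * B) i j) ^ m
          = ∑ j, ∑ p ∈ Fintype.piFinset (fun _ : Fin m => (Finset.univ : Finset (Fin n))),
              (v i * ∏ t, B (p t) i) * (v j * ∏ t, B (p t) j) := by
            refine Finset.sum_congr rfl fun j _ => ?_
            rw [key, Finset.mul_sum]
            exact Finset.sum_congr rfl fun p _ => by ring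
        _ = ∑ p ∈ Fintype.piFinset (fun _ : Fin m => (Finset.univ : Finset (Fin n))),
              ∑ j, (v i * ∏ t, B (p t) i) * (v j * ∏ t, B (p t) j) := Finset.sum_comm
        _ = ∑ p ∈ Fintype.piFinset (fun _ : Fin m => (Finset.univ : Finset (Fin n))),
              (v i * ∏ t, B (p t) i) * ∑ j, v j * ∏ t, B (p t) j := by
            exact Finset.sum_congr rfl fun p _ => (Finset.mul_sum _ _ _).symm
    rw [h1, Finset.sum_comm]
    refine Finset.sum_congr rfl fun p _ => ?_
    rw [← Finset.sum_mul, sq]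
  rw [step]
  exact Finset.sum_nonneg fun p _ => sq_nonneg _


lemma quad_Qf_decomp {n : ℕ} (A : Matrix (Fin n) (Fin n) ℝ) (hA : ∀ i j, |A i j| ≤ 1)
    (v : Fin n → ℝ) :
    ∑ i, ∑ j, v i * v j * Qf (A i j)
      = (1/Real.pi) * (∑ i, v i)^2 + (1/2) * (∑ i, ∑ j, v i * v j * A i j)
        + (1/Real.pi) * ∑' k, bcq k * (∑ i, ∑ j, v i * v j * A i j ^ (2*k+2)) := by
  have hsum : ∀ (i j : Fin n), Summable (fun k => v i * v j * (bcq k * A i j ^ (2*k+2))) :=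
    fun i j => (summable_W (hA i j)).mul_left _
  have key : ∑ i, ∑ j, v i * v j * Wser (A i j)
      = ∑' k, bcq k * ∑ i, ∑ j, v i * v j * A i j ^ (2*k+2) := by
    calc ∑ i, ∑ j, v i * v j * Wser (A i j)
        = ∑ i, ∑ j, ∑' k, v i * v j * (bcq k * A i j ^ (2*k+2)) := by
          refine Finset.sum_congr rfl fun i _ => Finset.sum_congr rfl fun j _ => ?_
          rw [Wser, ← tsum_mul_left]
      _ = ∑ i, ∑' k, ∑ j, v i * v j * (bcq k * A i j ^ (2*k+2)) := by
          refine Finset.sum_congr rfl fun i _ => ?_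
          exact (Summable.tsum_finsetSum (fun j _ => hsum i j)).symm
      _ = ∑' k, ∑ i, ∑ j, v i * v j * (bcq k * A i j ^ (2*k+2)) := by
          refine (Summable.tsum_finsetSum (fun i _ => ?_)).symm
          exact summable_sum (fun j _ => hsum i j)
      _ = ∑' k, bcq k * ∑ i, ∑ j, v i * v j * A i j ^ (2*k+2) := by
          refine tsum_congr fun k => ?_
          rw [Finset.mul_sum]
          refine Finset.sum_congr rfl fun i _ => ?_
          rw [Finset.mul_sum]
          exact Finset.sum_congr rfl fun j _ => by ring
  have expand : ∀ i j : Fin n, v i * v j * Qf (A i j)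
      = v i * v j * (1/Real.pi) + (v i * v j * A i j)/2
        + (v i * v j * Wser (A i j)) * (1/Real.pi) := by
    intro i j
    have hm : A i j ∈ Icc (-1:ℝ) 1 := by
      have := abs_le.mp (hA i j); exact ⟨this.1, this.2⟩
    rw [Qf_eq_Icc hm]
    ring
  have hsq : (∑ i, v i)^2 = ∑ i, ∑ j, v i * v j := by
    rw [sq, Finset.sum_mul_sum]
  calc ∑ i, ∑ j, v i * v j * Qf (A i j)
      = ∑ i, ∑ j, (v i * v j * (1/Real.pi) + (v i * v j * A i j)/2
          + (v i * v j * Wser (A i j)) * (1/Real.pi)) := by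
        exact Finset.sum_congr rfl fun i _ => Finset.sum_congr rfl fun j _ => expand i j
    _ = (∑ i, ∑ j, v i * v j) * (1/Real.pi) + (∑ i, ∑ j, v i * v j * A i j)/2
          + (∑ i, ∑ j, v i * v j * Wser (A i j)) * (1/Real.pi) := by
        simp only [Finset.sum_add_distrib, Finset.sum_div, ← Finset.sum_mul]
    _ = (1/Real.pi) * (∑ i, v i)^2 + (1/2) * (∑ i, ∑ j, v i * v j * A i j)
          + (1/Real.pi) * ∑' k, bcq k * (∑ i, ∑ j, v i * v j * A i j ^ (2*k+2)) := by
        rw [hsq, key]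
        ring

lemma summable_quadpow {n : ℕ} (A : Matrix (Fin n) (Fin n) ℝ) (hA : ∀ i j, |A i j| ≤ 1)
    (v : Fin n → ℝ) :
    Summable (fun k => bcq k * (∑ i, ∑ j, v i * v j * A i j ^ (2*k+2))) := by
  refine Summable.of_abs (Summable.of_nonneg_of_le (fun k => abs_nonneg _) (fun k => ?_)
    (bcq_summable.mul_right (∑ i, ∑ j, |v i * v j|)))
  rw [abs_mul, abs_of_pos (bcq_pos k)]
  refine mul_le_mul_of_nonneg_left ?_ (bcq_pos k).le
  calc |∑ i, ∑ j, v i * v j * A i j ^ (2*k+2)|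
      ≤ ∑ i, |∑ j, v i * v j * A i j ^ (2*k+2)| := Finset.abs_sum_le_sum_abs _ _
    _ ≤ ∑ i, ∑ j, |v i * v j * A i j ^ (2*k+2)| :=
        Finset.sum_le_sum fun i _ => Finset.abs_sum_le_sum_abs _ _
    _ ≤ ∑ i, ∑ j, |v i * v j| := by
        refine Finset.sum_le_sum fun i _ => Finset.sum_le_sum fun j _ => ?_
        rw [abs_mul]
        calc |v i * v j| * |A i j ^ (2*k+2)| ≤ |v i * v j| * 1 := by
              refine mul_le_mul_of_nonneg_left ?_ (abs_nonneg _)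
              rw [abs_pow]
              exact pow_le_one₀ (abs_nonneg _) (hA i j)
          _ = |v i * v j| := mul_one _

lemma quad_Qf_ge {n : ℕ} (A : Matrix (Fin n) (Fin n) ℝ) (hA : ∀ i j, |A i j| ≤ 1)
    (hpsd : A.PosSemidef) (v : Fin n → ℝ) (k0 : ℕ) :
    (1/Real.pi) * (bcq k0 * (∑ i, ∑ j, v i * v j * A i j ^ (2*k0+2)))
      ≤ ∑ i, ∑ j, v i * v j * Qf (A i j) := by
  rw [quad_Qf_decomp A hA v]
  have h1 : 0 ≤ (1/Real.pi) * (∑ i, v i)^2 := by positivity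
  have h2 : 0 ≤ (1/2) * (∑ i, ∑ j, v i * v j * A i j) := by
    have := quad_of_posSemidef hpsd v; linarith
  have h3 : bcq k0 * (∑ i, ∑ j, v i * v j * A i j ^ (2*k0+2))
      ≤ ∑' k, bcq k * (∑ i, ∑ j, v i * v j * A i j ^ (2*k+2)) := by
    refine Summable.le_tsum (summable_quadpow A hA v) k0 (fun k _ => ?_)
    exact mul_nonneg (bcq_pos k).le (quad_pow_nonneg hpsd _ v)
  have hpi : 0 < 1/Real.pi := by positivity
  nlinarith

lemma quad_Qf_nonneg {n : ℕ} (A : Matrix (Fin n) (Fin n) ℝ) (hA : ∀ i j, |A i j| ≤ 1)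
    (hpsd : A.PosSemidef) (v : Fin n → ℝ) :
    0 ≤ ∑ i, ∑ j, v i * v j * Qf (A i j) := by
  refine le_trans ?_ (quad_Qf_ge A hA hpsd v 0)
  have := quad_pow_nonneg hpsd 2 v
  have := bcq_pos 0
  positivity

lemma quad_lin {n : ℕ} (a b : ℝ) (X Y : Fin n → Fin n → ℝ) (v : Fin n → ℝ) :
    ∑ i, ∑ j, v i * v j * (a * X i j + b * Y i j)
      = a * (∑ i, ∑ j, v i * v j * X i j) + b * (∑ i, ∑ j, v i * v j * Y i j) := by
  simp only [Finset.mul_sum, ← Finset.sum_add_distrib]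
  exact Finset.sum_congr rfl fun i _ => Finset.sum_congr rfl fun j _ => by ring

/-- The fixed point iteration for the correlation matrix. -/
def gramIter {n : ℕ} (sw2 : ℝ) (C : Fin n → Fin n → ℝ) : ℕ → Matrix (Fin n) (Fin n) ℝ
  | 0 => Matrix.of C
  | m+1 => Matrix.of fun i j => sw2 * Qf (gramIter sw2 C m i j) + (1-sw2) * C i j


end QSeries
end QAux

noncomputable section
open QSeries Real Set Finset Matrix

set_option maxHeartbeats 1600000 in
/-- the limiting population Gram matrix `K` with entries
`K_{ij} = Q(cos θ_{ij})/(1 - σ_w²)`, where `cos θ_{ij}` solves the fixed-point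
equation, is strictly positive definite when the inputs are normalized and
pairwise non-parallel. -/
theorem limiting_population_gram_positive_definite {n d : ℕ} (hn : 0 < n)
    (sw2 : ℝ) (h1 : 0 < sw2) (h2 : sw2 < 1)
    (x : Fin n → Fin d → ℝ) (hx : ∀ i, euclNorm (x i) = Real.sqrt d)
    (hpar : ∀ i j, i ≠ j → ∀ t : ℝ, x i ≠ t • x j)
    (cθ : Fin n → Fin n → ℝ)
    (hrange : ∀ i j, cθ i j ∈ Set.Icc (-1 : ℝ) 1)
    (hfix : ∀ i j, cθ i j = sw2 * Qf (cθ i j) + (1 - sw2) * ((∑ k, x i k * x j k) / d))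
    (K : Matrix (Fin n) (Fin n) ℝ)
    (hK : ∀ i j, K i j = Qf (cθ i j) / (1 - sw2)) :
    0 < lamMin K := by
  classical
  have hpi := Real.pi_pos
  have h12 : (0:ℝ) < 1 - sw2 := by linarith
  set C : Fin n → Fin n → ℝ := fun i j => (∑ k, x i k * x j k) / d with hCdef
  -- quadratic form of K in terms of Qf ∘ cθ
  have hKquad : ∀ v : Fin n → ℝ, (∑ i, K.mulVec v i * v i)
      = (1/(1-sw2)) * ∑ i, ∑ j, v i * v j * Qf (cθ i j) := by
    intro v
    rw [Finset.mul_sum]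
    refine Finset.sum_congr rfl fun i _ => ?_
    simp only [Matrix.mulVec, dotProduct]
    rw [Finset.sum_mul, Finset.mul_sum]
    refine Finset.sum_congr rfl fun j _ => ?_
    rw [hK i j]
    field_simp
  -- nonemptiness of the unit sphere index
  have i0 : Fin n := ⟨0, hn⟩
  have hne : Nonempty {v : Fin n → ℝ // ∑ i, (v i) ^ 2 = 1} := by
    refine ⟨⟨Pi.single i0 1, ?_⟩⟩
    rw [Finset.sum_eq_single i0]
    · simp
    · intro b _ hb
      simp [Pi.single_apply, hb]
    · intro hb
      exact absurd (Finset.mem_univ i0) hb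
  -- basic facts about C
  have hCsym : ∀ i j, C i j = C j i := by
    intro i j
    simp only [hCdef]
    congr 1
    exact Finset.sum_congr rfl fun k _ => mul_comm _ _
  have hCquad : ∀ v : Fin n → ℝ, 0 ≤ ∑ i, ∑ j, v i * v j * C i j := by
    intro v
    have hkey : ∑ i, ∑ j, v i * v j * C i j
        = (∑ k, (∑ i, v i * x i k)^2) / d := by
      calc ∑ i, ∑ j, v i * v j * C i j
          = (∑ i, ∑ j, ∑ k, (v i * x i k) * (v j * x j k)) / d := by
            rw [Finset.sum_div]
            refine Finset.sum_congr rfl fun i _ => ?_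
            rw [Finset.sum_div]
            refine Finset.sum_congr rfl fun j _ => ?_
            simp only [hCdef]
            rw [← mul_div_assoc]
            congr 1
            rw [Finset.mul_sum]
            exact Finset.sum_congr rfl fun k _ => by ring
        _ = (∑ k, (∑ i, v i * x i k)^2) / d := by
            congr 1
            calc ∑ i, ∑ j, ∑ k, (v i * x i k) * (v j * x j k)
                = ∑ i, ∑ k, ∑ j, (v i * x i k) * (v j * x j k) :=
                  Finset.sum_congr rfl fun i _ => Finset.sum_comm
              _ = ∑ k, ∑ i, ∑ j, (v i * x i k) * (v j * x j k) := Finset.sum_comm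
              _ = ∑ k, (∑ i, v i * x i k)^2 := by
                  refine Finset.sum_congr rfl fun k _ => ?_
                  rw [sq, Finset.sum_mul_sum]
    rw [hkey]
    positivity
  -- the n = 1 case
  by_cases hn1 : n = 1
  · subst hn1
    have hC00 : 0 ≤ C i0 i0 := by
      have hnn : (0:ℝ) ≤ ∑ k, x i0 k * x i0 k :=
        Finset.sum_nonneg fun k _ => mul_self_nonneg _
      exact div_nonneg hnn (Nat.cast_nonneg d)
    have hc := hfix i0 i0
    have hcIcc := hrange i0 i0
    have hQ0 : 0 ≤ Qf (cθ i0 i0) := Qf_nonneg hcIcc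
    have hcge : 0 ≤ cθ i0 i0 := by
      have ht1 := mul_nonneg h1.le hQ0
      have ht2 := mul_nonneg h12.le hC00
      linarith [hc]
    have hQge : 1/Real.pi ≤ Qf (cθ i0 i0) := by
      have h0m : (0:ℝ) ∈ Icc (-1:ℝ) 1 := by norm_num
      have := Qf_mono h0m hcIcc hcge
      rwa [Qf_zero] at this
    have hval : ∀ v : {v : Fin 1 → ℝ // ∑ i, (v i)^2 = 1},
        (∑ i, K.mulVec v.1 i * v.1 i) = K i0 i0 := by
      rintro ⟨v, hv⟩
      rw [Fin.sum_univ_one] at hv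
      rw [Fin.sum_univ_one]
      have hi0 : i0 = 0 := Subsingleton.elim _ _
      rw [hi0]
      simp only [Matrix.mulVec, dotProduct, Fin.sum_univ_one]
      linear_combination (K 0 0) * hv
    have hKpos : 0 < K i0 i0 := by
      rw [hK]
      refine div_pos (lt_of_lt_of_le (by positivity) hQge) h12
    haveI := hne
    rw [lamMin]
    refine lt_of_lt_of_le hKpos (le_ciInf fun v => (hval v).ge)
  -- now n ≥ 2
  have hn2 : 2 ≤ n := by omega
  have hd : 0 < d := by
    by_contra hd0
    have hdz : d = 0 := by omega
    have hempty : IsEmpty (Fin d) := by rw [hdz]; infer_instance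
    have hij : (⟨0, by omega⟩ : Fin n) ≠ ⟨1, by omega⟩ := by
      intro h
      have := congrArg Fin.val h
      simp at this
    refine hpar ⟨0, by omega⟩ ⟨1, by omega⟩ hij 1 ?_
    funext k
    exact (hempty.false k).elim
  have hdR : (0:ℝ) < (d:ℝ) := by exact_mod_cast hd
  have hxsq : ∀ i, ∑ k, (x i k)^2 = (d:ℝ) := by
    intro i
    have h := hx i
    rw [euclNorm] at h
    have h1' : (0:ℝ) ≤ ∑ k, (x i k)^2 := Finset.sum_nonneg fun k _ => sq_nonneg _
    have h2' := congrArg (fun t : ℝ => t^2) h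
    beta_reduce at h2'
    rwa [Real.sq_sqrt h1', Real.sq_sqrt (Nat.cast_nonneg d)] at h2'
  have hCdiag : ∀ i, C i i = 1 := by
    intro i
    simp only [hCdef]
    have hms : ∑ k, x i k * x i k = ∑ k, (x i k)^2 :=
      Finset.sum_congr rfl fun k _ => (pow_two _).symm
    rw [hms, hxsq i, div_self (ne_of_gt hdR)]
  have hCabs : ∀ i j, |C i j| ≤ 1 := by
    intro i j
    have hcs := Finset.sum_mul_sq_le_sq_mul_sq Finset.univ (x i) (x j)
    rw [hxsq i, hxsq j] at hcs
    have habs : |∑ k, x i k * x j k| ≤ (d:ℝ) := by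
      rw [abs_le]
      constructor <;> nlinarith [hcs, sq_nonneg ((∑ k, x i k * x j k) + d),
        sq_nonneg ((∑ k, x i k * x j k) - d)]
    simp only [hCdef, abs_div, Nat.abs_cast]
    rw [div_le_one hdR]
    exact habs
  -- strict bound off-diagonal via inner product spaces
  have hCoff : ∀ i j, i ≠ j → |C i j| < 1 := by
    intro i j hij
    set u : Fin n → EuclideanSpace ℝ (Fin d) :=
      fun i => (WithLp.equiv 2 (Fin d → ℝ)).symm (x i) with hu
    have hcomp : ∀ i k, u i k = x i k := fun i k => rfl
    have hnorm : ∀ i, ‖u i‖ = Real.sqrt d := by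
      intro i
      rw [EuclideanSpace.norm_eq]
      rw [← hx i, euclNorm]
      congr 1
      exact Finset.sum_congr rfl fun k _ => by rw [hcomp, Real.norm_eq_abs, sq_abs]
    have hin : ∀ i j, inner ℝ (u i) (u j) = ∑ k, x i k * x j k := by
      intro i j
      rw [PiLp.inner_apply]
      exact Finset.sum_congr rfl fun k _ => by rw [hcomp, hcomp]; simp [RCLike.inner_apply, mul_comm]
    have hlt : |∑ k, x i k * x j k| < (d:ℝ) := by
      rcases lt_or_eq_of_le (abs_real_inner_le_norm (u i) (u j)) with h | h
      · rw [hin] at h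
        rwa [hnorm, hnorm, Real.mul_self_sqrt (Nat.cast_nonneg d)] at h
      · exfalso
        have hd2 : Real.sqrt d ≠ 0 := by
          rw [Real.sqrt_ne_zero' ]
          exact_mod_cast hd
        rcases abs_eq (mul_nonneg (norm_nonneg (u i)) (norm_nonneg (u j))) |>.mp h with
          hpos | hneg
        · have := inner_eq_norm_mul_iff_real.mp hpos
          rw [hnorm, hnorm] at this
          have huij : u i = u j := smul_right_injective _ hd2 this
          refine hpar i j hij 1 ?_
          funext k
          rw [one_smul]
          have := congrFun (congrArg (WithLp.equiv 2 (Fin d → ℝ)) huij) k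
          exact this
        · have hneg' : inner ℝ (u i) (-(u j)) = ‖u i‖ * ‖-(u j)‖ := by
            rw [inner_neg_right, norm_neg, hneg]
            ring
          have := inner_eq_norm_mul_iff_real.mp hneg'
          rw [hnorm, norm_neg, hnorm] at this
          have huij : u i = -(u j) := smul_right_injective _ hd2 this
          refine hpar i j hij (-1) ?_
          funext k
          have := congrFun (congrArg (WithLp.equiv 2 (Fin d → ℝ)) huij) k
          simpa [hcomp] using this
    simp only [hCdef, abs_div, Nat.abs_cast]
    rw [div_lt_one hdR]
    exact hlt
  -- symmetry of cθ
  have habs_zero : ∀ t : ℝ, |t| ≤ sw2 * |t| → t = 0 := by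
    intro t ht
    have h0 := abs_nonneg t
    have : |t| = 0 := by nlinarith
    exact abs_eq_zero.mp this
  have hcsym : ∀ i j, cθ i j = cθ j i := by
    intro i j
    have e1 := hfix i j
    have e2 := hfix j i
    have h3 : C i j = C j i := hCsym i j
    have hdiff : cθ i j - cθ j i = sw2 * (Qf (cθ i j) - Qf (cθ j i)) := by
      simp only [hCdef] at h3 ⊢
      linear_combination e1 - e2 + (1 - sw2) * h3
    have hlip := Qf_lipschitz (hrange i j) (hrange j i)
    have hb : |cθ i j - cθ j i| ≤ sw2 * |cθ i j - cθ j i| := by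
      calc |cθ i j - cθ j i| = sw2 * |Qf (cθ i j) - Qf (cθ j i)| := by
            rw [hdiff, abs_mul, abs_of_pos h1]
        _ ≤ sw2 * |cθ i j - cθ j i| := mul_le_mul_of_nonneg_left hlip h1.le
    have := habs_zero _ hb
    linarith [this]
  -- diagonal of cθ
  have hcdiag : ∀ i, cθ i i = 1 := by
    intro i
    have e1 := hfix i i
    have hCd := hCdiag i
    have hdiff : cθ i i - 1 = sw2 * (Qf (cθ i i) - Qf 1) := by
      rw [Qf_one]
      simp only [hCdef] at hCd
      linear_combination e1 + (1 - sw2) * hCd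
    have hlip := Qf_lipschitz (hrange i i) (show (1:ℝ) ∈ Icc (-1:ℝ) 1 by norm_num)
    have hb : |cθ i i - 1| ≤ sw2 * |cθ i i - 1| := by
      calc |cθ i i - 1| = sw2 * |Qf (cθ i i) - Qf 1| := by
            rw [hdiff, abs_mul, abs_of_pos h1]
        _ ≤ sw2 * |cθ i i - 1| := mul_le_mul_of_nonneg_left hlip h1.le
    have := habs_zero _ hb
    linarith [this]
  -- strict off-diagonal bound for cθ
  have hcoff : ∀ i j, i ≠ j → |cθ i j| < 1 := by
    intro i j hij
    have e1 := hfix i j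
    have habs := congrArg abs e1
    have hQ1 : Qf (cθ i j) ≤ 1 := Qf_le_one (hrange i j)
    have hQ0 : 0 ≤ Qf (cθ i j) := Qf_nonneg (hrange i j)
    have hCb := hCoff i j hij
    calc |cθ i j| = |sw2 * Qf (cθ i j) + (1 - sw2) * C i j| := by
          simp only [hCdef]
          exact habs
      _ ≤ |sw2 * Qf (cθ i j)| + |(1 - sw2) * C i j| := abs_add_le _ _
      _ = sw2 * Qf (cθ i j) + (1 - sw2) * |C i j| := by
          rw [abs_mul, abs_mul, abs_of_pos h1, abs_of_pos h12,
            abs_of_nonneg hQ0]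
      _ < sw2 * 1 + (1 - sw2) * 1 := by
          have hh1 : sw2 * Qf (cθ i j) ≤ sw2 * 1 := mul_le_mul_of_nonneg_left hQ1 h1.le
          have hh2 : (1 - sw2) * |C i j| < (1 - sw2) * 1 := by
            exact mul_lt_mul_of_pos_left hCb h12
          linarith
      _ = 1 := by ring
  -- the iteration invariant
  have hiter : ∀ m, (∀ i j, gramIter sw2 C m i j = gramIter sw2 C m j i)
      ∧ (∀ i j, |gramIter sw2 C m i j| ≤ 1) ∧ (gramIter sw2 C m).PosSemidef := by
    intro m
    induction m with
    | zero =>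
      exact ⟨fun i j => hCsym i j, fun i j => hCabs i j,
        posSemidef_of_quad (fun i j => hCsym i j) hCquad⟩
    | succ m ih =>
      obtain ⟨hsym, habs, hpsd⟩ := ih
      have hmem : ∀ i j, gramIter sw2 C m i j ∈ Icc (-1:ℝ) 1 := by
        intro i j
        have := abs_le.mp (habs i j)
        exact ⟨this.1, this.2⟩
      refine ⟨?_, ?_, ?_⟩
      · intro i j
        show sw2 * Qf (gramIter sw2 C m i j) + (1-sw2) * C i j
          = sw2 * Qf (gramIter sw2 C m j i) + (1-sw2) * C j i
        rw [hsym i j, hCsym i j]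
      · intro i j
        show |sw2 * Qf (gramIter sw2 C m i j) + (1-sw2) * C i j| ≤ 1
        have hQ1 : Qf (gramIter sw2 C m i j) ≤ 1 := Qf_le_one (hmem i j)
        have hQ0 : 0 ≤ Qf (gramIter sw2 C m i j) := Qf_nonneg (hmem i j)
        have hCb := hCabs i j
        calc |sw2 * Qf (gramIter sw2 C m i j) + (1-sw2) * C i j|
            ≤ |sw2 * Qf (gramIter sw2 C m i j)| + |(1-sw2) * C i j| := abs_add_le _ _
          _ = sw2 * Qf (gramIter sw2 C m i j) + (1 - sw2) * |C i j| := by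
              rw [abs_mul, abs_mul, abs_of_pos h1, abs_of_pos h12, abs_of_nonneg hQ0]
          _ ≤ sw2 * 1 + (1 - sw2) * 1 := by
              have hh1 := mul_le_mul_of_nonneg_left hQ1 h1.le
              have hh2 := mul_le_mul_of_nonneg_left hCb h12.le
              linarith
          _ = 1 := by ring
      · refine posSemidef_of_quad (fun i j => ?_) (fun v => ?_)
        · show sw2 * Qf (gramIter sw2 C m i j) + (1-sw2) * C i j
            = sw2 * Qf (gramIter sw2 C m j i) + (1-sw2) * C j i
          rw [hsym i j, hCsym i j]
        · show 0 ≤ ∑ i, ∑ j, v i * v j *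
            (sw2 * Qf (gramIter sw2 C m i j) + (1-sw2) * C i j)
          rw [quad_lin sw2 (1-sw2) (fun i j => Qf (gramIter sw2 C m i j)) C v]
          have t1 := quad_Qf_nonneg (gramIter sw2 C m) habs hpsd v
          have t2 := hCquad v
          have := mul_nonneg h1.le t1
          have := mul_nonneg h12.le t2
          linarith
  -- convergence of the iteration to cθ
  have hconv : ∀ m i j, |gramIter sw2 C m i j - cθ i j| ≤ 2 * sw2 ^ m := by
    intro m
    induction m with
    | zero =>
      intro i j
      have hC1 := abs_le.mp (hCabs i j)
      have hc1 := hrange i j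
      show |C i j - cθ i j| ≤ 2 * sw2 ^ 0
      rw [pow_zero, mul_one, abs_le]
      constructor
      · have := hc1.2; linarith [hC1.1]
      · have := hc1.1; linarith [hC1.2]
    | succ m ih =>
      intro i j
      have e1 := hfix i j
      have hgm : gramIter sw2 C (m+1) i j - cθ i j
          = sw2 * (Qf (gramIter sw2 C m i j) - Qf (cθ i j)) := by
        show sw2 * Qf (gramIter sw2 C m i j) + (1-sw2) * C i j - cθ i j = _
        simp only [hCdef]
        linear_combination -e1
      have hmem : gramIter sw2 C m i j ∈ Icc (-1:ℝ) 1 := by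
        have := abs_le.mp ((hiter m).2.1 i j)
        exact ⟨this.1, this.2⟩
      have hlip := Qf_lipschitz hmem (hrange i j)
      calc |gramIter sw2 C (m+1) i j - cθ i j|
          = sw2 * |Qf (gramIter sw2 C m i j) - Qf (cθ i j)| := by
            rw [hgm, abs_mul, abs_of_pos h1]
        _ ≤ sw2 * |gramIter sw2 C m i j - cθ i j| :=
            mul_le_mul_of_nonneg_left hlip h1.le
        _ ≤ sw2 * (2 * sw2 ^ m) := mul_le_mul_of_nonneg_left (ih i j) h1.le
        _ = 2 * sw2 ^ (m+1) := by rw [pow_succ]; ring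
  -- cθ is positive semidefinite
  have hcpsd : (Matrix.of cθ).PosSemidef := by
    refine posSemidef_of_quad (fun i j => hcsym i j) (fun v => ?_)
    have htend : Tendsto (fun m => ∑ i, ∑ j, v i * v j * gramIter sw2 C m i j) atTop
        (nhds (∑ i, ∑ j, v i * v j * cθ i j)) := by
      refine tendsto_finset_sum _ (fun i _ => tendsto_finset_sum _ (fun j _ => ?_))
      refine Tendsto.const_mul _ ?_
      have hdz : Tendsto (fun m => gramIter sw2 C m i j - cθ i j) atTop (nhds 0) := by
        refine squeeze_zero_norm (fun m => hconv m i j) ?_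
        have := (tendsto_pow_atTop_nhds_zero_of_lt_one h1.le h2).const_mul 2
        simpa using this
      have := hdz.add_const (cθ i j)
      simpa using this
    refine ge_of_tendsto htend ?_
    filter_upwards with m
    exact quad_of_posSemidef (hiter m).2.2 v
  -- uniform off-diagonal bound
  have hpair : (Finset.univ : Finset (Fin n × Fin n)).Nonempty := ⟨(i0, i0), Finset.mem_univ _⟩
  set cbar : ℝ := Finset.univ.sup' hpair
    (fun p : Fin n × Fin n => if p.1 = p.2 then 0 else |cθ p.1 p.2|) with hcbar
  have hcbar0 : 0 ≤ cbar := by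
    have h00 : (if i0 = i0 then (0:ℝ) else |cθ i0 i0|) ≤ cbar :=
      Finset.le_sup' (fun p : Fin n × Fin n => if p.1 = p.2 then 0 else |cθ p.1 p.2|)
        (Finset.mem_univ (i0, i0))
    rwa [if_pos rfl] at h00
  have hcbar1 : cbar < 1 := by
    rw [hcbar, Finset.sup'_lt_iff]
    intro p _
    by_cases hp : p.1 = p.2
    · simp [hp]
    · simpa [hp] using hcoff p.1 p.2 hp
  have hcbarle : ∀ i j, i ≠ j → |cθ i j| ≤ cbar := by
    intro i j hij
    have h00 : (if i = j then (0:ℝ) else |cθ i j|) ≤ cbar :=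
      Finset.le_sup' (fun p : Fin n × Fin n => if p.1 = p.2 then 0 else |cθ p.1 p.2|)
        (Finset.mem_univ (i, j))
    rwa [if_neg hij] at h00
  -- choose the exponent
  have htend0 : Tendsto (fun m : ℕ => (n:ℝ) * cbar ^ m) atTop (nhds 0) := by
    have := (tendsto_pow_atTop_nhds_zero_of_lt_one hcbar0 hcbar1).const_mul (n:ℝ)
    simpa using this
  obtain ⟨m0, hm0⟩ := (htend0.eventually (eventually_lt_nhds (show (0:ℝ) < 1/2 by norm_num))).exists
  have hsmall : (n:ℝ) * cbar ^ (2*m0+2) ≤ 1/2 := by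
    have hple : cbar ^ (2*m0+2) ≤ cbar ^ m0 :=
      pow_le_pow_of_le_one hcbar0 hcbar1.le (by omega)
    have := mul_le_mul_of_nonneg_left hple (Nat.cast_nonneg (α := ℝ) n)
    linarith
  -- final bound
  have hMabs : ∀ i j, |(Matrix.of cθ) i j| ≤ 1 := by
    intro i j
    have := hrange i j
    exact abs_le.mpr ⟨this.1, this.2⟩
  set ε : ℝ := (1/(1-sw2)) * ((1/Real.pi) * (bcq m0 * (1/2))) with hε
  have hεpos : 0 < ε := by
    have hb := bcq_pos m0
    rw [hε]
    positivity
  have hlow : ∀ v : {v : Fin n → ℝ // ∑ i, (v i) ^ 2 = 1},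
      ε ≤ ∑ i, K.mulVec v.1 i * v.1 i := by
    rintro ⟨v, hv⟩
    rw [hKquad v]
    -- lower bound on the Hadamard power quadratic form
    set m' : ℕ := 2*m0+2 with hm'
    have hT : 1 - (n:ℝ) * cbar ^ m' ≤ ∑ i, ∑ j, v i * v j * ((Matrix.of cθ) i j) ^ m' := by
      have hsplit : ∀ i : Fin n, ∑ j, v i * v j * ((Matrix.of cθ) i j) ^ m'
          = v i * v i + ∑ j ∈ Finset.univ.erase i, v i * v j * ((Matrix.of cθ) i j) ^ m' := by
        intro i
        rw [← Finset.add_sum_erase Finset.univ _ (Finset.mem_univ i)]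
        congr 1
        show v i * v i * (cθ i i) ^ m' = v i * v i
        rw [hcdiag i, one_pow, mul_one]
      have hRterm : ∀ i : Fin n, ∀ j ∈ Finset.univ.erase i,
          -(|v i| * |v j| * cbar ^ m') ≤ v i * v j * ((Matrix.of cθ) i j) ^ m' := by
        intro i j hj
        have hij : j ≠ i := Finset.ne_of_mem_erase hj
        have hb : |v i * v j * ((Matrix.of cθ) i j) ^ m'| ≤ |v i| * |v j| * cbar ^ m' := by
          rw [abs_mul, abs_mul, abs_pow]
          refine mul_le_mul_of_nonneg_left ?_ (by positivity)
          exact pow_le_pow_left₀ (abs_nonneg _) (hcbarle i j (Ne.symm hij)) m'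
        linarith [neg_abs_le (v i * v j * ((Matrix.of cθ) i j) ^ m')]
      have hR : -((∑ i, |v i|)^2 * cbar ^ m')
          ≤ ∑ i, ∑ j ∈ Finset.univ.erase i, v i * v j * ((Matrix.of cθ) i j) ^ m' := by
        have step1 : ∑ i, ∑ j ∈ Finset.univ.erase i, -(|v i| * |v j| * cbar ^ m')
            ≤ ∑ i, ∑ j ∈ Finset.univ.erase i, v i * v j * ((Matrix.of cθ) i j) ^ m' :=
          Finset.sum_le_sum fun i _ => Finset.sum_le_sum fun j hj => hRterm i j hj
        have step2 : ∑ i, ∑ j ∈ Finset.univ.erase i, (|v i| * |v j| * cbar ^ m')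
            ≤ ∑ i : Fin n, ∑ j : Fin n, |v i| * |v j| * cbar ^ m' := by
          refine Finset.sum_le_sum fun i _ => ?_
          refine Finset.sum_le_sum_of_subset_of_nonneg (Finset.erase_subset _ _)
            (fun j _ _ => by positivity)
        have step3 : ∑ i : Fin n, ∑ j : Fin n, |v i| * |v j| * cbar ^ m'
            = (∑ i, |v i|)^2 * cbar ^ m' := by
          calc ∑ i : Fin n, ∑ j : Fin n, |v i| * |v j| * cbar ^ m'
              = (∑ i : Fin n, ∑ j : Fin n, |v i| * |v j|) * cbar ^ m' := by
                rw [Finset.sum_mul]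
                exact Finset.sum_congr rfl fun i _ => by rw [Finset.sum_mul]
            _ = (∑ i, |v i|)^2 * cbar ^ m' := by rw [sq, Finset.sum_mul_sum]
        have step4 : ∑ i, ∑ j ∈ Finset.univ.erase i, -(|v i| * |v j| * cbar ^ m')
            = -(∑ i, ∑ j ∈ Finset.univ.erase i, (|v i| * |v j| * cbar ^ m')) := by
          rw [← Finset.sum_neg_distrib]
          exact Finset.sum_congr rfl fun i _ => by rw [Finset.sum_neg_distrib]
        rw [step4] at step1
        linarith [step2, step3.symm, step1]
      have hn4 : (∑ i, |v i|)^2 ≤ (n:ℝ) := by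
        have hcs := Finset.sum_mul_sq_le_sq_mul_sq Finset.univ (fun _ : Fin n => (1:ℝ))
          (fun i => |v i|)
        simp only [one_mul, one_pow, sq_abs] at hcs
        rw [hv] at hcs
        simpa using hcs
      have hsum : ∑ i, ∑ j, v i * v j * ((Matrix.of cθ) i j) ^ m'
          = (∑ i, v i * v i)
            + ∑ i, ∑ j ∈ Finset.univ.erase i, v i * v j * ((Matrix.of cθ) i j) ^ m' := by
        rw [← Finset.sum_add_distrib]
        exact Finset.sum_congr rfl fun i _ => hsplit i
      have hvv : ∑ i, v i * v i = 1 := by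
        rw [← hv]
        exact Finset.sum_congr rfl fun i _ => (pow_two _).symm
      rw [hsum, hvv]
      have hpow0 : (0:ℝ) ≤ cbar ^ m' := by positivity
      nlinarith [hR, hn4]
    -- combine with the series bound
    have hge := quad_Qf_ge (Matrix.of cθ) hMabs hcpsd v m0
    have hThalf : (1:ℝ)/2 ≤ ∑ i, ∑ j, v i * v j * ((Matrix.of cθ) i j) ^ (2*m0+2) := by
      have := hT
      rw [hm'] at this
      linarith [hsmall]
    have hb := bcq_pos m0
    have hstep : (1/Real.pi) * (bcq m0 * (1/2))
        ≤ ∑ i, ∑ j, v i * v j * Qf (cθ i j) := by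
      have hmul1 : bcq m0 * (1/2)
          ≤ bcq m0 * (∑ i, ∑ j, v i * v j * ((Matrix.of cθ) i j) ^ (2*m0+2)) :=
        mul_le_mul_of_nonneg_left hThalf hb.le
      have hmul2 : (1/Real.pi) * (bcq m0 * (1/2))
          ≤ (1/Real.pi) * (bcq m0 * (∑ i, ∑ j, v i * v j * ((Matrix.of cθ) i j) ^ (2*m0+2))) :=
        mul_le_mul_of_nonneg_left hmul1 (by positivity)
      exact hmul2.trans hge
    rw [hε]
    have h1s : (0:ℝ) < 1/(1-sw2) := by positivity
    calc (1/(1-sw2)) * ((1/Real.pi) * (bcq m0 * (1/2)))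
        ≤ (1/(1-sw2)) * (∑ i, ∑ j, v i * v j * Qf (cθ i j)) :=
          mul_le_mul_of_nonneg_left hstep h1s.le
      _ = 1/(1-sw2) * ∑ i, ∑ j, v i * v j * Qf (cθ i j) := by ring
  haveI := hne
  rw [lamMin]
  exact lt_of_lt_of_le hεpos (le_ciInf hlow)
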